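/- arXiv:1010.3798 — 4 statements merged into one kernel-verified Lean document; each statement's English description precedes it below -/
import Mathlib

section
/- There is ε₀ > 0 such that for every ε with 0 < ε < ε₀ and every integer y₀: the system of inequalities ⋀_{i=1}^n |γ_i(y₀) − r_i| < ε holds if and only if there exist integers y₁,…,yₙ such that ⋀_{i=1}^n |σ_i(y₀,…,y_{i−1}) − y_i − r_i| < ε. -/
/-- Proposition 3.4: let `σ₁(y₀), …, σₙ(y₀,…,y_{n−1})` be real polynomials,
`0 < rᵢ < 1`, and define recursively `yᵢ(y₀) = ⌊σᵢ(y₀, y₁(y₀), …, y_{i−1}(y₀))⌋` and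
`γᵢ(y₀) = σᵢ(y₀, y₁(y₀), …, y_{i−1}(y₀)) − yᵢ(y₀)`.  Then for all sufficiently small
`ε > 0`, an integer `y₀` satisfies `⋀ᵢ |γᵢ(y₀) − rᵢ| < ε` iff there are integers
`y₁,…,yₙ` with `⋀ᵢ |σᵢ(y₀,…,y_{i−1}) − yᵢ − rᵢ| < ε`. -/
theorem generalized_poly_system_iff (n : ℕ)
    (σp : ∀ i : Fin n, MvPolynomial (Fin ((i : ℕ) + 1)) ℝ)
    (r : Fin n → ℝ) (hr : ∀ i, r i ∈ Set.Ioo (0 : ℝ) 1)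
    (y : Fin n → ℤ → ℤ) (γ : Fin n → ℤ → ℝ)
    (hy : ∀ (i : Fin n) (x : ℤ),
      y i x = ⌊MvPolynomial.eval
        (fun m : Fin ((i : ℕ) + 1) =>
          if (m : ℕ) = 0 then (x : ℝ)
          else (y ⟨(m : ℕ) - 1, by have := m.isLt; have := i.isLt; omega⟩ x : ℝ))
        (σp i)⌋)
    (hγ : ∀ (i : Fin n) (x : ℤ),
      γ i x = MvPolynomial.eval
        (fun m : Fin ((i : ℕ) + 1) =>
          if (m : ℕ) = 0 then (x : ℝ)
          else (y ⟨(m : ℕ) - 1, by have := m.isLt; have := i.isLt; omega⟩ x : ℝ))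
        (σp i) - (y i x : ℝ)) :
    ∃ ε₀ : ℝ, 0 < ε₀ ∧ ∀ ε : ℝ, 0 < ε → ε < ε₀ → ∀ x : ℤ,
      ((∀ i : Fin n, |γ i x - r i| < ε) ↔
        ∃ z : Fin n → ℤ, ∀ i : Fin n,
          |MvPolynomial.eval
            (fun m : Fin ((i : ℕ) + 1) =>
              if (m : ℕ) = 0 then (x : ℝ)
              else (z ⟨(m : ℕ) - 1, by have := m.isLt; have := i.isLt; omega⟩ : ℝ))
            (σp i) - (z i : ℝ) - r i| < ε) := by

  classical
  rcases Nat.eq_zero_or_pos n with hn | hn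
  · subst hn
    refine ⟨1, one_pos, fun ε hε hε1 x => ?_⟩
    constructor
    · intro _; exact ⟨fun i => i.elim0, fun i => i.elim0⟩
    · intro _ i; exact i.elim0
  · have hne : Nonempty (Fin n) := ⟨⟨0, hn⟩⟩
    set ε₀ := Finset.univ.inf' Finset.univ_nonempty
      (fun i : Fin n => min (r i) (1 - r i)) with hε₀
    have hε₀pos : 0 < ε₀ := by
      rw [hε₀, Finset.lt_inf'_iff]
      intro i _
      have := hr i
      simp only [Set.mem_Ioo] at this
      exact lt_min this.1 (by linarith [this.2])
    refine ⟨ε₀, hε₀pos, fun ε hε hεlt x => ?_⟩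
    have hεi : ∀ i : Fin n, ε ≤ r i ∧ ε ≤ 1 - r i := by
      intro i
      have h1 : ε₀ ≤ min (r i) (1 - r i) :=
        Finset.inf'_le _ (Finset.mem_univ i)
      constructor <;> [exact le_trans hεlt.le (h1.trans (min_le_left _ _));
        exact le_trans hεlt.le (h1.trans (min_le_right _ _))]
    have floorlem : ∀ (i : Fin n) (t : ℝ) (k : ℤ), |t - k - r i| < ε → ⌊t⌋ = k := by
      intro i t k h
      obtain ⟨h1, h2⟩ := hεi i
      rw [abs_lt] at h
      refine Int.floor_eq_iff.mpr ⟨by linarith, by linarith⟩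
    constructor
    · intro h
      refine ⟨fun i => y i x, fun i => ?_⟩
      have := h i
      rw [hγ i x] at this
      exact this
    · rintro ⟨z, hz⟩
      have hz0 : ∀ k : ℕ, ∀ hk : k < n, z ⟨k, hk⟩ = y ⟨k, hk⟩ x := by
        intro k
        induction k using Nat.strong_induction_on with
        | _ k ih =>
          intro hk
          set i : Fin n := ⟨k, hk⟩ with hi
          have heq : (fun m : Fin ((i : ℕ) + 1) =>
              if (m : ℕ) = 0 then (x : ℝ)
              else (z ⟨(m : ℕ) - 1, by have := m.isLt; have := i.isLt; omega⟩ : ℝ))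
              = (fun m : Fin ((i : ℕ) + 1) =>
              if (m : ℕ) = 0 then (x : ℝ)
              else (y ⟨(m : ℕ) - 1, by have := m.isLt; have := i.isLt; omega⟩ x : ℝ)) := by
            funext m
            by_cases hm : (m : ℕ) = 0
            · simp [hm]
            · simp only [hm, if_false]
              have hlt : (m : ℕ) - 1 < k := by have := m.isLt; simp [hi] at this ⊢; omega
              have := ih ((m : ℕ) - 1) hlt (by omega)
              rw [this]
          have h1 := hz i
          rw [heq] at h1
          have h2 := floorlem i _ (z i) h1
          rw [hy i x, ← h2]
      have hz' : ∀ i : Fin n, z i = y i x := fun i => hz0 i.1 i.2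
      intro i
      have heq : (fun m : Fin ((i : ℕ) + 1) =>
          if (m : ℕ) = 0 then (x : ℝ)
          else (z ⟨(m : ℕ) - 1, by have := m.isLt; have := i.isLt; omega⟩ : ℝ))
          = (fun m : Fin ((i : ℕ) + 1) =>
          if (m : ℕ) = 0 then (x : ℝ)
          else (y ⟨(m : ℕ) - 1, by have := m.isLt; have := i.isLt; omega⟩ x : ℝ)) := by
        funext m
        by_cases hm : (m : ℕ) = 0
        · simp [hm]
        · simp only [hm, if_false]
          rw [hz' _]
      have h1 := hz i
      rw [heq, hz' i] at h1
      rw [hγ i x]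
      exact h1
end

section
/- For every integer x, ({√2·x})² = {2·√2·x·{√2·x}}. -/
/-- For every integer `x`, `({√2·x})² = {2·√2·x·{√2·x}}`, where `{·}` denotes the
fractional part. -/
theorem fract_sqrt_two_identity (x : ℤ) :
    (Int.fract (Real.sqrt 2 * x)) ^ 2 =
      Int.fract (2 * Real.sqrt 2 * x * Int.fract (Real.sqrt 2 * x)) := by
  set f := Int.fract (Real.sqrt 2 * x) with hf
  set n := ⌊Real.sqrt 2 * (x : ℝ)⌋ with hn
  have hs : Real.sqrt 2 * x = f + n := by
    rw [hf]; unfold Int.fract; push_cast; ring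
  have hsq : (Real.sqrt 2 * x) ^ 2 = 2 * x ^ 2 := by
    rw [mul_pow, Real.sq_sqrt (by norm_num)]
  have key : 2 * Real.sqrt 2 * x * f = f ^ 2 + ((2 * x ^ 2 - n ^ 2 : ℤ) : ℝ) := by
    push_cast
    have : (Real.sqrt 2 * x) ^ 2 = (f + n) ^ 2 := by rw [hs]
    rw [hsq] at this
    linear_combination 2*f*hs - this
  rw [key, Int.fract_add_intCast, Int.fract_eq_self.2 ⟨sq_nonneg f, ?_⟩]
  have h0 : 0 ≤ f := Int.fract_nonneg _
  have h1 : f < 1 := Int.fract_lt_one _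
  nlinarith
end

section
/- Let R be the subring of the polynomial ring ℚ[X] generated by X and (X² + 1)/3. Then R ∩ ℚ = ℤ; that is, every constant polynomial belonging to R is an integer. -/
open Polynomial

/-- Let `R` be the subring of `ℚ[X]` generated by `X` and `(X² + 1)/3`. Then the
constant polynomials belonging to `R` are exactly the integers. -/
theorem constants_of_shepherdson_ring (q : ℚ) :
    C q ∈ Subring.closure {(X : ℚ[X]), C (1 / 3 : ℚ) * (X ^ 2 + 1)} ↔ ∃ m : ℤ, (m : ℚ) = q := by
  constructor
  · intro h
    set φ : ℚ[X] →+* ℂ := (Polynomial.aeval Complex.I : ℚ[X] →ₐ[ℚ] ℂ).toRingHom with hφ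
    have hmem : φ (C q) ∈ Subring.closure
        (φ '' {(X : ℚ[X]), C (1 / 3 : ℚ) * (X ^ 2 + 1)}) := by
      rw [← RingHom.map_closure]
      exact Subring.mem_map.2 ⟨_, h, rfl⟩
    have himg : φ '' {(X : ℚ[X]), C (1 / 3 : ℚ) * (X ^ 2 + 1)} = {Complex.I, 0} := by
      rw [Set.image_insert_eq, Set.image_singleton]
      have h1 : φ (X : ℚ[X]) = Complex.I := by simp [hφ]
      have h2 : φ (C (1 / 3 : ℚ) * (X ^ 2 + 1)) = 0 := by
        simp [hφ, Complex.I_sq]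
      rw [h1, h2]
    rw [himg] at hmem
    have hle : Subring.closure ({Complex.I, 0} : Set ℂ) ≤
        GaussianInt.toComplex.range := by
      rw [Subring.closure_le]
      rintro z (rfl | rfl)
      · exact ⟨⟨0, 1⟩, by simp [GaussianInt.toComplex_def]⟩
      · exact ⟨0, by simp⟩
    obtain ⟨z, hz⟩ := hle hmem
    have hq : φ (C q) = (q : ℂ) := by simp [hφ]
    rw [hq] at hz
    refine ⟨z.re, ?_⟩
    have hre : ((z.re : ℤ) : ℝ) = (q : ℝ) := by
      have := congrArg Complex.re hz
      simpa using this
    exact_mod_cast hre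
  · rintro ⟨m, rfl⟩
    have : (C ((m : ℤ) : ℚ) : ℚ[X]) = (m : ℚ[X]) := C_eq_intCast m
    rw [this]
    exact intCast_mem _ m
end

section
/- Let R be the subring of the polynomial ring ℚ[X] generated by X and (X² + 1)/3. There is no ring homomorphism from R to the ring ℤ₃ of 3-adic integers. -/
open Polynomial

/-- Let `R` be the subring of `ℚ[X]` generated by `X` and `(X² + 1)/3`. There is no
(unital) ring homomorphism from `R` to the ring of 3-adic integers. -/
theorem no_hom_to_padic_three :
    IsEmpty
      (↥(Subring.closure {(X : ℚ[X]), C (1 / 3 : ℚ) * (X ^ 2 + 1)}) →+* ℤ_[3]) := by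
  constructor
  intro f
  set S := Subring.closure {(X : ℚ[X]), C (1 / 3 : ℚ) * (X ^ 2 + 1)} with hS
  have hX : (X : ℚ[X]) ∈ S := Subring.subset_closure (by simp)
  have hg : C (1 / 3 : ℚ) * (X ^ 2 + 1) ∈ S := Subring.subset_closure (by simp)
  have key : (⟨X, hX⟩ : S) ^ 2 + 1 = 3 * ⟨C (1 / 3 : ℚ) * (X ^ 2 + 1), hg⟩ := by
    apply Subtype.ext
    push_cast
    rw [show ((3 : S) : ℚ[X]) = (3 : ℚ[X]) from rfl]
    rw [show (3 : ℚ[X]) = C (3 : ℚ) by rw [map_ofNat]]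
    rw [← mul_assoc, ← C_mul]
    norm_num
  have h2 : (f ⟨X, hX⟩) ^ 2 + 1 = 3 * f ⟨C (1 / 3 : ℚ) * (X ^ 2 + 1), hg⟩ := by
    have := congrArg f key
    simpa only [map_add, map_mul, map_pow, map_one, map_ofNat] using this
  have h3 := congrArg (PadicInt.toZMod (p := 3)) h2
  simp only [map_add, map_mul, map_pow, map_one, map_ofNat] at h3
  have h4 : (PadicInt.toZMod (f ⟨X, hX⟩)) ^ 2 + 1 = 0 := by
    rw [h3, show ((3 : ZMod 3)) = 0 by decide]
    ring
  have h5 : ∀ a : ZMod 3, a ^ 2 + 1 ≠ 0 := by decide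
  exact h5 _ h4
end
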